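/- Weighted Opial inequality for general kernels: Let I = [a,b], Φ : I × I → ℝ continuous and nonnegative, y, h ∈ C(I) with |y(x)| ≤ ∫ₐˣ Φ(x,t)|h(t)| dt for all x ∈ I (with a ≤ x). Let α, β > 0, r > max(1, α), and u, v ∈ C(I) with u ≥ 0, v > 0. Then for x ∈ I, ∫ₐˣ u(s)|y(s)|^β |h(s)|^α ds ≤ C(x) (∫ₐˣ v(s)|h(s)|^r ds)^{(α+β)/r}, where C(x) = (α/(α+β))^{α/r} (∫ₐˣ (u(s)^r v(s)^{-α})^{1/(r-α)} P(s)^{β(r-1)/(r-α)} ds)^{(r-α)/r} and P(s) = ∫ₐˢ v(t)^{-1/(r-1)} Φ(s,t)^{r/(r-1)} dt. -/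

import Mathlib

open intervalIntegral

private lemma opial_memLp_restrict {f : ℝ → ℝ} (hf : Continuous f) (a b : ℝ) (p : ENNReal) :
    MeasureTheory.MemLp f p (MeasureTheory.volume.restrict (Set.Ioc a b)) := by
  haveI : MeasureTheory.IsFiniteMeasure (MeasureTheory.volume.restrict (Set.Ioc a b)) := by
    constructor
    rw [MeasureTheory.Measure.restrict_apply_univ]
    exact measure_Ioc_lt_top
  obtain ⟨C, hC⟩ := isCompact_Icc.exists_bound_of_continuousOn
    (hf.continuousOn : ContinuousOn f (Set.Icc a b))
  refine MeasureTheory.MemLp.mono_exponent ?_ (le_top : p ≤ ⊤)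
  refine MeasureTheory.memLp_top_of_bound hf.aestronglyMeasurable C ?_
  exact (MeasureTheory.ae_restrict_iff' measurableSet_Ioc).2
    (Filter.Eventually.of_forall fun t ht => hC t (Set.Ioc_subset_Icc_self ht))

private lemma opial_holder_interval {f g : ℝ → ℝ} (hf : Continuous f) (hg : Continuous g)
    {a b : ℝ} (hab : a ≤ b)
    (hf0 : ∀ t ∈ Set.Icc a b, 0 ≤ f t) (hg0 : ∀ t ∈ Set.Icc a b, 0 ≤ g t)
    {p q : ℝ} (hpq : p.HolderConjugate q) :
    ∫ t in a..b, f t * g t ≤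
      (∫ t in a..b, f t ^ p) ^ (1 / p) * (∫ t in a..b, g t ^ q) ^ (1 / q) := by
  rw [intervalIntegral.integral_of_le hab, intervalIntegral.integral_of_le hab,
    intervalIntegral.integral_of_le hab]
  exact MeasureTheory.integral_mul_le_Lp_mul_Lq_of_nonneg hpq
    ((MeasureTheory.ae_restrict_iff' measurableSet_Ioc).2
      (Filter.Eventually.of_forall fun t ht => hf0 t (Set.Ioc_subset_Icc_self ht)))
    ((MeasureTheory.ae_restrict_iff' measurableSet_Ioc).2
      (Filter.Eventually.of_forall fun t ht => hg0 t (Set.Ioc_subset_Icc_self ht)))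
    (opial_memLp_restrict hf a b _) (opial_memLp_restrict hg a b _)

/-- Weighted Opial inequality for general kernels (Theorem 2.1 / Koliha–Pečarić). -/
theorem weighted_opial_general_kernel (a b : ℝ) (hab : a ≤ b)
    (Φ : ℝ → ℝ → ℝ)
    (hΦc : ContinuousOn (fun p : ℝ × ℝ => Φ p.1 p.2) (Set.Icc a b ×ˢ Set.Icc a b))
    (hΦ0 : ∀ s ∈ Set.Icc a b, ∀ t ∈ Set.Icc a b, 0 ≤ Φ s t)
    (y h u v : ℝ → ℝ)
    (hy : ContinuousOn y (Set.Icc a b)) (hh : ContinuousOn h (Set.Icc a b))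
    (hu : ContinuousOn u (Set.Icc a b)) (hv : ContinuousOn v (Set.Icc a b))
    (hu0 : ∀ s ∈ Set.Icc a b, 0 ≤ u s) (hv0 : ∀ s ∈ Set.Icc a b, 0 < v s)
    (hdom : ∀ x ∈ Set.Icc a b, |y x| ≤ ∫ t in a..x, Φ x t * |h t|)
    (α β r : ℝ) (hα : 0 < α) (hβ : 0 < β) (hr : max 1 α < r)
    (x : ℝ) (hx : x ∈ Set.Icc a b) :
    ∫ s in a..x, u s * |y s| ^ β * |h s| ^ α ≤
      ((α / (α + β)) ^ (α / r) *
        (∫ s in a..x, (u s ^ r * v s ^ (-α)) ^ (1 / (r - α)) *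
            (∫ t in a..s, v t ^ (-(1 / (r - 1))) * Φ s t ^ (r / (r - 1)))
              ^ (β * (r - 1) / (r - α))) ^ ((r - α) / r)) *
      (∫ s in a..x, v s * |h s| ^ r) ^ ((α + β) / r) := by
  -- numeric facts
  have hr1 : (1 : ℝ) < r := lt_of_le_of_lt (le_max_left 1 α) hr
  have hαr : α < r := lt_of_le_of_lt (le_max_right 1 α) hr
  have hr0 : (0 : ℝ) < r := lt_trans one_pos hr1
  have hr1' : (0 : ℝ) < r - 1 := by linarith
  have hrα : (0 : ℝ) < r - α := by linarith
  have hαβ : (0 : ℝ) < α + β := by linarith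
  have hax : a ≤ x := hx.1
  have hsub : Set.Icc a x ⊆ Set.Icc a b := Set.Icc_subset_Icc_right hx.2
  -- projection trick
  set e : ℝ → ℝ := fun t => ((Set.projIcc a b hab t : Set.Icc a b) : ℝ) with he_def
  have hecont : Continuous e := continuous_subtype_val.comp continuous_projIcc
  have hemem : ∀ t, e t ∈ Set.Icc a b := fun t => (Set.projIcc a b hab t).2
  have heeq : ∀ t ∈ Set.Icc a b, e t = t := by
    intro t ht
    simp only [he_def, Set.projIcc_of_mem hab ht]
  set U : ℝ → ℝ := fun s => u (e s) with hU_def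
  set V : ℝ → ℝ := fun s => v (e s) with hV_def
  set H : ℝ → ℝ := fun s => |h (e s)| with hH_def
  set Y : ℝ → ℝ := fun s => |y (e s)| with hY_def
  set K : ℝ → ℝ → ℝ := fun s t => Φ (e s) (e t) with hK_def
  have hUc : Continuous U := hu.comp_continuous hecont hemem
  have hVc : Continuous V := hv.comp_continuous hecont hemem
  have hHc : Continuous H := (hh.comp_continuous hecont hemem).abs
  have hYc : Continuous Y := (hy.comp_continuous hecont hemem).abs
  have hKc : Continuous (fun p : ℝ × ℝ => K p.1 p.2) :=
    hΦc.comp_continuous ((hecont.comp continuous_fst).prodMk (hecont.comp continuous_snd))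
      (fun p => Set.mk_mem_prod (hemem _) (hemem _))
  have hV0 : ∀ t, 0 < V t := fun t => hv0 _ (hemem t)
  have hU0 : ∀ t, 0 ≤ U t := fun t => hu0 _ (hemem t)
  have hH0 : ∀ t, 0 ≤ H t := fun t => abs_nonneg _
  have hY0 : ∀ t, 0 ≤ Y t := fun t => abs_nonneg _
  have hK0 : ∀ s t, 0 ≤ K s t := fun s t => hΦ0 _ (hemem s) _ (hemem t)
  -- conjugate exponents
  have hconj1 : (r / (r - 1)).HolderConjugate r := by
    rw [Real.holderConjugate_iff]
    constructor
    · rw [lt_div_iff₀ hr1']; linarith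
    · field_simp; ring
  have hconj2 : (r / (r - α)).HolderConjugate (r / α) := by
    rw [Real.holderConjugate_iff]
    constructor
    · rw [lt_div_iff₀ hrα]; linarith
    · rw [inv_div, inv_div]; field_simp; ring
  -- basic objects
  set G : ℝ → ℝ := fun t => V t * H t ^ r with hG_def
  have hGc : Continuous G := hVc.mul (hHc.rpow_const fun t => Or.inr hr0.le)
  have hG0 : ∀ t, 0 ≤ G t := fun t => mul_nonneg (hV0 t).le (Real.rpow_nonneg (hH0 t) r)
  set z : ℝ → ℝ := fun s => ∫ t in a..s, G t with hz_def
  have hzc : Continuous z :=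
    intervalIntegral.continuous_primitive (fun c d => hGc.intervalIntegrable c d) a
  have hz0 : ∀ s ∈ Set.Icc a x, 0 ≤ z s := fun s hs =>
    intervalIntegral.integral_nonneg hs.1 (fun t _ => hG0 t)
  have hz' : ∀ s : ℝ, HasDerivAt z (G s) s := fun s =>
    (hGc.integral_hasStrictDerivAt a s).hasDerivAt
  set P : ℝ → ℝ := fun s => ∫ t in a..s, V t ^ (-(1 / (r - 1))) * K s t ^ (r / (r - 1))
    with hP_def
  have hPc : Continuous P := by
    apply intervalIntegral.continuous_parametric_intervalIntegral_of_continuous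
      (f := fun s t => V t ^ (-(1 / (r - 1))) * K s t ^ (r / (r - 1))) ?_ continuous_id
    exact ((hVc.comp continuous_snd).rpow_const (fun p => Or.inl (hV0 _).ne')).mul
      (hKc.rpow_const fun p => Or.inr (by positivity))
  have hP0 : ∀ s ∈ Set.Icc a x, 0 ≤ P s := fun s hs =>
    intervalIntegral.integral_nonneg hs.1 (fun t _ =>
      mul_nonneg (Real.rpow_nonneg (hV0 t).le _) (Real.rpow_nonneg (hK0 s t) _))
  -- Step A : pointwise bound on |y|
  have stepA : ∀ s ∈ Set.Icc a x, Y s ≤ P s ^ ((r - 1) / r) * z s ^ (1 / r) := by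
    intro s hs
    have hsab : s ∈ Set.Icc a b := hsub hs
    have has : a ≤ s := hs.1
    have hKsc : Continuous (fun t => K s t) := hKc.comp (Continuous.prodMk_right s)
    have h2 : (∫ t in a..s, Φ s t * |h t|) = ∫ t in a..s, K s t * H t := by
      apply intervalIntegral.integral_congr
      intro t ht
      beta_reduce
      rw [Set.uIcc_of_le has] at ht
      have htab : t ∈ Set.Icc a b := (Set.Icc_subset_Icc_right hsab.2) ht
      simp only [hK_def, hH_def, heeq s hsab, heeq t htab]
    have h3 : Y s ≤ ∫ t in a..s, K s t * H t := by
      rw [hY_def]; simp only [heeq s hsab]; rw [← h2]; exact hdom s hsab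
    have h4 : ∀ t, K s t * H t =
        (V t ^ (-(1 / r)) * K s t) * (V t ^ (1 / r) * H t) := by
      intro t
      have hVV : V t ^ (-(1 / r)) * V t ^ (1 / r) = 1 := by
        rw [← Real.rpow_add (hV0 t)]; norm_num
      calc K s t * H t = (V t ^ (-(1 / r)) * V t ^ (1 / r)) * (K s t * H t) := by
            rw [hVV, one_mul]
        _ = (V t ^ (-(1 / r)) * K s t) * (V t ^ (1 / r) * H t) := by ring
    have h5 := opial_holder_interval
      (f := fun t => V t ^ (-(1 / r)) * K s t) (g := fun t => V t ^ (1 / r) * H t)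
      ((hVc.rpow_const fun t => Or.inl (hV0 t).ne').mul hKsc)
      ((hVc.rpow_const fun t => Or.inl (hV0 t).ne').mul hHc)
      has (fun t _ => mul_nonneg (Real.rpow_nonneg (hV0 t).le _) (hK0 s t))
      (fun t _ => mul_nonneg (Real.rpow_nonneg (hV0 t).le _) (hH0 t)) hconj1
    have hf_eq : (∫ t in a..s, (V t ^ (-(1 / r)) * K s t) ^ (r / (r - 1))) = P s := by
      rw [hP_def]
      apply intervalIntegral.integral_congr
      intro t _
      beta_reduce
      rw [Real.mul_rpow (Real.rpow_nonneg (hV0 t).le _) (hK0 s t),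
        ← Real.rpow_mul (hV0 t).le]
      congr 2
      field_simp
    have hg_eq : (∫ t in a..s, (V t ^ (1 / r) * H t) ^ r) = z s := by
      rw [hz_def]
      apply intervalIntegral.integral_congr
      intro t _
      beta_reduce
      rw [Real.mul_rpow (Real.rpow_nonneg (hV0 t).le _) (hH0 t),
        ← Real.rpow_mul (hV0 t).le, one_div, inv_mul_cancel₀ hr0.ne', Real.rpow_one]
    have hq1 : 1 / (r / (r - 1)) = (r - 1) / r := one_div_div r (r - 1)
    calc Y s ≤ ∫ t in a..s, K s t * H t := h3
      _ = ∫ t in a..s, (V t ^ (-(1 / r)) * K s t) * (V t ^ (1 / r) * H t) := by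
          apply intervalIntegral.integral_congr; intro t _; beta_reduce; exact h4 t
      _ ≤ (∫ t in a..s, (V t ^ (-(1 / r)) * K s t) ^ (r / (r - 1))) ^ (1 / (r / (r - 1))) *
          (∫ t in a..s, (V t ^ (1 / r) * H t) ^ r) ^ (1 / r) := h5
      _ = P s ^ ((r - 1) / r) * z s ^ (1 / r) := by rw [hf_eq, hg_eq, hq1]
  -- the two Hölder factors
  set F₁ : ℝ → ℝ := fun s => U s * V s ^ (-(α / r)) * P s ^ (β * (r - 1) / r) with hF₁_def
  set F₂ : ℝ → ℝ := fun s => V s ^ (α / r) * H s ^ α * z s ^ (β / r) with hF₂_def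
  have hF₁c : Continuous F₁ :=
    ((hUc.mul (hVc.rpow_const fun t => Or.inl (hV0 t).ne')).mul
      (hPc.rpow_const fun t => Or.inr (by positivity)))
  have hF₂c : Continuous F₂ :=
    ((hVc.rpow_const fun t => Or.inr (by positivity)).mul
      (hHc.rpow_const fun t => Or.inr hα.le)).mul
      (hzc.rpow_const fun t => Or.inr (by positivity))
  have hF₁0 : ∀ s ∈ Set.Icc a x, 0 ≤ F₁ s := by
    intro s hs
    exact mul_nonneg (mul_nonneg (hU0 s) (Real.rpow_nonneg (hV0 s).le _))
      (Real.rpow_nonneg (hP0 s hs) _)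
  have hF₂0 : ∀ s ∈ Set.Icc a x, 0 ≤ F₂ s := by
    intro s hs
    exact mul_nonneg (mul_nonneg (Real.rpow_nonneg (hV0 s).le _)
      (Real.rpow_nonneg (hH0 s) _)) (Real.rpow_nonneg (hz0 s hs) _)
  -- pointwise bound
  have hpt : ∀ s ∈ Set.Icc a x, U s * Y s ^ β * H s ^ α ≤ F₁ s * F₂ s := by
    intro s hs
    have h1 : Y s ^ β ≤ P s ^ (β * (r - 1) / r) * z s ^ (β / r) := by
      calc Y s ^ β ≤ (P s ^ ((r - 1) / r) * z s ^ (1 / r)) ^ β :=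
            Real.rpow_le_rpow (hY0 s) (stepA s hs) hβ.le
        _ = P s ^ (β * (r - 1) / r) * z s ^ (β / r) := by
            rw [Real.mul_rpow (Real.rpow_nonneg (hP0 s hs) _) (Real.rpow_nonneg (hz0 s hs) _),
              ← Real.rpow_mul (hP0 s hs), ← Real.rpow_mul (hz0 s hs)]
            congr 2 <;> ring
    have hVV : V s ^ (-(α / r)) * V s ^ (α / r) = 1 := by
      rw [← Real.rpow_add (hV0 s)]; norm_num
    calc U s * Y s ^ β * H s ^ α
        ≤ U s * (P s ^ (β * (r - 1) / r) * z s ^ (β / r)) * H s ^ α := by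
          apply mul_le_mul_of_nonneg_right _ (Real.rpow_nonneg (hH0 s) α)
          exact mul_le_mul_of_nonneg_left h1 (hU0 s)
      _ = F₁ s * F₂ s := by
          rw [hF₁_def, hF₂_def]
          calc U s * (P s ^ (β * (r - 1) / r) * z s ^ (β / r)) * H s ^ α
              = (V s ^ (-(α / r)) * V s ^ (α / r)) *
                (U s * (P s ^ (β * (r - 1) / r) * z s ^ (β / r)) * H s ^ α) := by
                rw [hVV, one_mul]
            _ = (U s * V s ^ (-(α / r)) * P s ^ (β * (r - 1) / r)) *
                (V s ^ (α / r) * H s ^ α * z s ^ (β / r)) := by ring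
  -- Step D : exact evaluation of ∫ G z^{β/α}
  have hC1 : (1 : ℝ) ≤ (α + β) / α := by
    rw [le_div_iff₀ hα]; linarith
  have stepD : (∫ s in a..x, G s * z s ^ (β / α)) =
      (α / (α + β)) * z x ^ ((α + β) / α) := by
    have hderiv : ∀ s ∈ Set.uIcc a x,
        HasDerivAt (fun s => (α / (α + β)) * z s ^ ((α + β) / α)) (G s * z s ^ (β / α)) s := by
      intro s _
      have h1 : HasDerivAt (fun s => z s ^ ((α + β) / α))
          (G s * ((α + β) / α) * z s ^ ((α + β) / α - 1)) s :=
        (hz' s).rpow_const (Or.inr hC1)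
      have h2 := h1.const_mul (α / (α + β))
      refine h2.congr_deriv ?_
      have he : (α + β) / α - 1 = β / α := by field_simp; ring
      rw [he]
      field_simp
    have hcont : IntervalIntegrable (fun s => G s * z s ^ (β / α))
        MeasureTheory.volume a x :=
      (hGc.mul (hzc.rpow_const fun t => Or.inr (by positivity))).intervalIntegrable a x
    rw [intervalIntegral.integral_eq_sub_of_hasDerivAt hderiv hcont]
    have hza : z a = 0 := intervalIntegral.integral_same
    rw [hza, Real.zero_rpow (by positivity : ((α + β) / α : ℝ) ≠ 0)]
    ring
  -- identify integrals with the goal's integrals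
  have hI1 : (∫ s in a..x, u s * |y s| ^ β * |h s| ^ α) =
      ∫ s in a..x, U s * Y s ^ β * H s ^ α := by
    apply intervalIntegral.integral_congr
    intro s hsu
    beta_reduce
    rw [Set.uIcc_of_le hax] at hsu
    have hsab := hsub hsu
    simp only [hU_def, hY_def, hH_def, heeq s hsab]
  have hMID : (∫ s in a..x, F₁ s ^ (r / (r - α))) =
      ∫ s in a..x, (u s ^ r * v s ^ (-α)) ^ (1 / (r - α)) *
        (∫ t in a..s, v t ^ (-(1 / (r - 1))) * Φ s t ^ (r / (r - 1)))
          ^ (β * (r - 1) / (r - α)) := by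
    apply intervalIntegral.integral_congr
    intro s hsu
    beta_reduce
    rw [Set.uIcc_of_le hax] at hsu
    have hsab := hsub hsu
    have hPinner : (∫ t in a..s, v t ^ (-(1 / (r - 1))) * Φ s t ^ (r / (r - 1))) = P s := by
      rw [hP_def]
      apply intervalIntegral.integral_congr
      intro t htu
      beta_reduce
      rw [Set.uIcc_of_le hsu.1] at htu
      have htab : t ∈ Set.Icc a b := (Set.Icc_subset_Icc_right hsab.2) htu
      simp only [hK_def, hV_def, heeq s hsab, heeq t htab]
    rw [hPinner, hF₁_def]
    have husv : U s = u s := by simp only [hU_def, heeq s hsab]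
    have hvsv : V s = v s := by simp only [hV_def, heeq s hsab]
    rw [← husv, ← hvsv]
    have e1 : (-(α / r)) * (r / (r - α)) = (-α) * (1 / (r - α)) := by
      field_simp
      try ring
    have e2 : (β * (r - 1) / r) * (r / (r - α)) = β * (r - 1) / (r - α) := by
      field_simp
      try ring
    have e3 : r / (r - α) = r * (1 / (r - α)) := by ring
    rw [Real.mul_rpow (mul_nonneg (hU0 s) (Real.rpow_nonneg (hV0 s).le _))
        (Real.rpow_nonneg (hP0 s hsu) _),
      Real.mul_rpow (hU0 s) (Real.rpow_nonneg (hV0 s).le _),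
      ← Real.rpow_mul (hV0 s).le, ← Real.rpow_mul (hP0 s hsu),
      Real.mul_rpow (Real.rpow_nonneg (hU0 s) r) (Real.rpow_nonneg (hV0 s).le _),
      ← Real.rpow_mul (hU0 s), ← Real.rpow_mul (hV0 s).le, e1, e2, ← e3]
  have hI5 : (∫ s in a..x, F₂ s ^ (r / α)) = (α / (α + β)) * z x ^ ((α + β) / α) := by
    rw [← stepD]
    apply intervalIntegral.integral_congr
    intro s hsu
    beta_reduce
    rw [Set.uIcc_of_le hax] at hsu
    have f1 : (α / r) * (r / α) = 1 := by field_simp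
    have f2 : α * (r / α) = r := by field_simp
    have f3 : (β / r) * (r / α) = β / α := by
      field_simp
      try ring
    rw [hF₂_def, hG_def]
    rw [Real.mul_rpow (mul_nonneg (Real.rpow_nonneg (hV0 s).le _)
        (Real.rpow_nonneg (hH0 s) _)) (Real.rpow_nonneg (hz0 s hsu) _),
      Real.mul_rpow (Real.rpow_nonneg (hV0 s).le _) (Real.rpow_nonneg (hH0 s) _),
      ← Real.rpow_mul (hV0 s).le, ← Real.rpow_mul (hH0 s), ← Real.rpow_mul (hz0 s hsu),
      f1, f2, f3, Real.rpow_one]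
  have hzx : z x = ∫ s in a..x, v s * |h s| ^ r := by
    rw [hz_def, hG_def]
    apply intervalIntegral.integral_congr
    intro s hsu
    beta_reduce
    rw [Set.uIcc_of_le hax] at hsu
    have hsab := hsub hsu
    simp only [hV_def, hH_def, heeq s hsab]
  have hzx0 : 0 ≤ z x := hz0 x ⟨hax, le_refl x⟩
  -- integrability for the monotonicity step
  have hint1 : IntervalIntegrable (fun s => U s * Y s ^ β * H s ^ α)
      MeasureTheory.volume a x :=
    ((hUc.mul (hYc.rpow_const fun t => Or.inr hβ.le)).mul
      (hHc.rpow_const fun t => Or.inr hα.le)).intervalIntegrable a x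
  have hint2 : IntervalIntegrable (fun s => F₁ s * F₂ s) MeasureTheory.volume a x :=
    (hF₁c.mul hF₂c).intervalIntegrable a x
  have main := opial_holder_interval hF₁c hF₂c hax hF₁0 hF₂0 hconj2
  have h1p : 1 / (r / (r - α)) = (r - α) / r := one_div_div r (r - α)
  have h1q : 1 / (r / α) = α / r := one_div_div r α
  have hexp : ((α + β) / α) * (α / r) = (α + β) / r := by
    field_simp
    try ring
  calc ∫ s in a..x, u s * |y s| ^ β * |h s| ^ α
      = ∫ s in a..x, U s * Y s ^ β * H s ^ α := hI1
    _ ≤ ∫ s in a..x, F₁ s * F₂ s :=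
        intervalIntegral.integral_mono_on hax hint1 hint2 hpt
    _ ≤ (∫ s in a..x, F₁ s ^ (r / (r - α))) ^ (1 / (r / (r - α))) *
        (∫ s in a..x, F₂ s ^ (r / α)) ^ (1 / (r / α)) := main
    _ = (∫ s in a..x, (u s ^ r * v s ^ (-α)) ^ (1 / (r - α)) *
            (∫ t in a..s, v t ^ (-(1 / (r - 1))) * Φ s t ^ (r / (r - 1)))
              ^ (β * (r - 1) / (r - α))) ^ ((r - α) / r) *
        ((α / (α + β)) * z x ^ ((α + β) / α)) ^ (α / r) := by
        rw [hMID, hI5, h1p, h1q]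
    _ = ((α / (α + β)) ^ (α / r) *
          (∫ s in a..x, (u s ^ r * v s ^ (-α)) ^ (1 / (r - α)) *
              (∫ t in a..s, v t ^ (-(1 / (r - 1))) * Φ s t ^ (r / (r - 1)))
                ^ (β * (r - 1) / (r - α))) ^ ((r - α) / r)) *
        (∫ s in a..x, v s * |h s| ^ r) ^ ((α + β) / r) := by
        rw [Real.mul_rpow (div_nonneg hα.le hαβ.le) (Real.rpow_nonneg hzx0 _),
          ← Real.rpow_mul hzx0, hexp, ← hzx]
        ring
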